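/- Let u be an arithmetic sequence and I₁, I₂ translation invariant free ideals of ℕ with I₂ ⊄ I₁. Then there exists x ∈ ℝ/ℤ such that u_n x I₂-converges to 0 but does not I₁-converge to 0; hence the I₂-characterized subgroup t_u^{I₂}(𝕋) is not contained in t_u^{I₁}(𝕋). -/

import Mathlib

private lemma half_summable : Summable (fun k : ℕ => ((1:ℝ)/2)^(k+1)) := by
  have h := (summable_geometric_of_lt_one (by norm_num : (0:ℝ) ≤ 1/2)
    (by norm_num : (1:ℝ)/2 < 1)).mul_left (1/2 : ℝ)
  apply h.congr
  intro k
  rw [pow_succ]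
  ring

private lemma geom_tail_summable (J : ℕ) :
    Summable (fun k : ℕ => (if k < J then (0:ℝ) else (1/2)^(k+1))) := by
  apply Summable.of_nonneg_of_le (fun k => by positivity) (fun k => ?_) half_summable
  by_cases h : k < J <;> simp [h]

private lemma geom_tail_eq (J : ℕ) :
    ∑' k : ℕ, (if k < J then (0:ℝ) else (1/2)^(k+1)) = (1/2)^J := by
  have h := Summable.sum_add_tsum_nat_add (f := fun k : ℕ => (if k < J then (0:ℝ) else (1/2)^(k+1)))
    J (geom_tail_summable J)
  have hhead : (∑ i ∈ Finset.range J,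
      (if i < J then (0:ℝ) else (1/2)^(i+1))) = 0 := by
    apply Finset.sum_eq_zero
    intro i hi
    simp [Finset.mem_range.mp hi]
  have htail : (∑' i : ℕ, (if i + J < J then (0:ℝ) else (1/2)^(i+J+1))) = (1/2)^J := by
    have heq : ∀ i : ℕ, (if i + J < J then (0:ℝ) else (1/2)^(i+J+1))
        = ((1/2)^(J) * (1/2)) * (1/2)^i := by
      intro i
      rw [if_neg (by omega)]
      rw [pow_add, pow_add]
      ring
    rw [tsum_congr heq, tsum_mul_left,
      tsum_geometric_of_lt_one (by norm_num) (by norm_num)]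
    ring
  rw [← h, hhead, zero_add, htail]

/-- If `I₁, I₂` are translation invariant proper free ideals of `ℕ` with `I₂ ⊄ I₁`, then
there is `x ∈ ℝ/ℤ` (represented by a real `x`) with `u_n x` `I₂`-converging to `0` but not
`I₁`-converging to `0`; hence `t_u^{I₂}(𝕋) ⊄ t_u^{I₁}(𝕋)`. -/
theorem stmt_18 (u : ℕ → ℕ)
    (hu0 : u 0 = 1) (humono : StrictMono u)
    (hdvd : ∀ n, u n ∣ u (n + 1))
    (I₁ I₂ : Set (Set ℕ))
    (hne₁ : I₁.Nonempty)
    (hunion₁ : ∀ A B : Set ℕ, A ∈ I₁ → B ∈ I₁ → A ∪ B ∈ I₁)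
    (hsubset₁ : ∀ A B : Set ℕ, A ⊆ B → B ∈ I₁ → A ∈ I₁)
    (hfree₁ : ∀ A : Set ℕ, A.Finite → A ∈ I₁)
    (hproper₁ : Set.univ ∉ I₁)
    (htrans₁ : ∀ A ∈ I₁, ∀ z : ℤ, {m : ℕ | ∃ a ∈ A, (a : ℤ) + z = (m : ℤ)} ∈ I₁)
    (hne₂ : I₂.Nonempty)
    (hunion₂ : ∀ A B : Set ℕ, A ∈ I₂ → B ∈ I₂ → A ∪ B ∈ I₂)
    (hsubset₂ : ∀ A B : Set ℕ, A ⊆ B → B ∈ I₂ → A ∈ I₂)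
    (hfree₂ : ∀ A : Set ℕ, A.Finite → A ∈ I₂)
    (hproper₂ : Set.univ ∉ I₂)
    (htrans₂ : ∀ A ∈ I₂, ∀ z : ℤ, {m : ℕ | ∃ a ∈ A, (a : ℤ) + z = (m : ℤ)} ∈ I₂)
    (hnsub : ¬ I₂ ⊆ I₁) :
    ∃ x : ℝ,
      (∀ ε : ℝ, 0 < ε →
        {n : ℕ | ε ≤ |(u n : ℝ) * x - (round ((u n : ℝ) * x) : ℝ)|} ∈ I₂) ∧
      ¬ (∀ ε : ℝ, 0 < ε →
        {n : ℕ | ε ≤ |(u n : ℝ) * x - (round ((u n : ℝ) * x) : ℝ)|} ∈ I₁) := by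
  classical
  -- ## Step 1: extract a sparse set S ∈ I₂ \ I₁ with gaps ≥ 5
  obtain ⟨S, hS2, hS1, hgap⟩ : ∃ S : Set ℕ, S ∈ I₂ ∧ S ∉ I₁ ∧
      (∀ a ∈ S, ∀ b ∈ S, a < b → a + 5 ≤ b) := by
    obtain ⟨A, hA2, hA1⟩ := Set.not_subset.mp hnsub
    set L : Set ℕ := {a | a ∈ A ∧ ∀ b ∈ A, b / 4 = a / 4 → a ≤ b} with hLdef
    have hcover : ∀ a ∈ A, ∃ m ∈ L, ∃ j, j < 4 ∧ m + j = a := by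
      intro a ha
      have hP : ∃ b, b ∈ A ∧ b / 4 = a / 4 := ⟨a, ha, rfl⟩
      obtain ⟨hmA, hm4⟩ := Nat.find_spec hP
      refine ⟨Nat.find hP, ⟨hmA, fun b hb hb4 => Nat.find_min' hP ⟨hb, by rw [hb4, hm4]⟩⟩,
        a - Nat.find hP, ?_, ?_⟩
      · have h1 : Nat.find hP ≤ a := Nat.find_min' hP ⟨ha, rfl⟩
        omega
      · have h1 : Nat.find hP ≤ a := Nat.find_min' hP ⟨ha, rfl⟩
        omega
    have hL1 : L ∉ I₁ := by
      intro hL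
      apply hA1
      have hT := htrans₁ L hL
      refine hsubset₁ A _ ?_
        (hunion₁ _ _ (hunion₁ _ _ (hT 0) (hT 1)) (hunion₁ _ _ (hT 2) (hT 3)))
      intro a ha
      obtain ⟨m, hmL, j, hj4, hja⟩ := hcover a ha
      rcases (show j = 0 ∨ j = 1 ∨ j = 2 ∨ j = 3 by omega) with rfl | rfl | rfl | rfl
      · exact Or.inl (Or.inl ⟨m, hmL, by omega⟩)
      · exact Or.inl (Or.inr ⟨m, hmL, by omega⟩)
      · exact Or.inr (Or.inl ⟨m, hmL, by omega⟩)
      · exact Or.inr (Or.inr ⟨m, hmL, by omega⟩)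
    have hgapL : ∀ i : ℕ, ∀ a, (a ∈ L ∧ (a/4) % 2 = i) → ∀ b, (b ∈ L ∧ (b/4) % 2 = i) →
        a < b → a + 5 ≤ b := by
      rintro i a ⟨⟨haA, hamin⟩, hai⟩ b ⟨⟨hbA, hbmin⟩, hbi⟩ hab
      have hne : a / 4 ≠ b / 4 := by
        intro h
        have h1 := hamin b hbA (by omega)
        have h2 := hbmin a haA h
        omega
      have hle : a / 4 ≤ b / 4 := Nat.div_le_div_right hab.le
      omega
    have hex : {a | a ∈ L ∧ (a/4) % 2 = 0} ∉ I₁ ∨ {a | a ∈ L ∧ (a/4) % 2 = 1} ∉ I₁ := by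
      by_contra h
      push_neg at h
      exact hL1 (hsubset₁ L _ (fun a ha => by
        by_cases h2 : (a / 4) % 2 = 0
        · exact Or.inl ⟨ha, h2⟩
        · exact Or.inr ⟨ha, by omega⟩) (hunion₁ _ _ h.1 h.2))
    rcases hex with h | h
    · exact ⟨_, hsubset₂ _ A (fun a ha => ha.1.1) hA2, h, fun a ha b hb => hgapL 0 a ha b hb⟩
    · exact ⟨_, hsubset₂ _ A (fun a ha => ha.1.1) hA2, h, fun a ha b hb => hgapL 1 a ha b hb⟩
  -- ## Step 2: basic facts about u
  have hupos : ∀ n, 0 < u n := by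
    intro n
    have := humono.monotone (Nat.zero_le n)
    omega
  have huposR : ∀ n, (0:ℝ) < u n := fun n => by exact_mod_cast hupos n
  have hdouble : ∀ n, 2 * u n ≤ u (n + 1) := by
    intro n
    obtain ⟨m, hm⟩ := hdvd n
    have h1 := humono (Nat.lt_succ_self n)
    have h2 := hupos n
    rcases (show m = 0 ∨ m = 1 ∨ 2 ≤ m by omega) with rfl | rfl | h3
    · rw [hm] at h1; omega
    · rw [hm] at h1; omega
    · rw [hm]
      calc 2 * u n ≤ m * u n := Nat.mul_le_mul_right _ h3
      _ = u n * m := Nat.mul_comm _ _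
  have hgrow : ∀ n k, 2 ^ k * u n ≤ u (n + k) := by
    intro n k
    induction k with
    | zero => simp
    | succ k ih =>
      calc 2 ^ (k+1) * u n = 2 * (2 ^ k * u n) := by ring
      _ ≤ 2 * u (n + k) := by omega
      _ ≤ u (n + k + 1) := hdouble _
  have hpow : ∀ k, 2 ^ k ≤ u k := by
    intro k
    have := hgrow 0 k
    simpa [hu0] using this
  have hdvd' : ∀ k j, u k ∣ u (k + j) := by
    intro k j
    induction j with
    | zero => exact dvd_rfl
    | succ j ih => exact ih.trans (hdvd _)
  have hdvdle : ∀ k n, k ≤ n → u k ∣ u n := by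
    intro k n h
    have := hdvd' k (n - k)
    rwa [show k + (n - k) = n by omega] at this
  -- ## Step 3: the digits and the real number x
  set q : ℕ → ℕ := fun n => u (n + 1) / u n with hqdef
  have hqmul : ∀ n, q n * u n = u (n + 1) := fun n => Nat.div_mul_cancel (hdvd n)
  have hq2 : ∀ n, 2 ≤ q n := by
    intro n
    have h1 := hdouble n
    have h3 := hupos n
    nlinarith [hqmul n]
  set c : ℕ → ℕ := fun n => if n ∈ S then q n / 2 else 0 with hcdef
  have hczero : ∀ n, n ∉ S → c n = 0 := by
    intro n hn; simp [hcdef, hn]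
  have hcmul : ∀ k, 2 * c k * u k ≤ u (k + 1) := by
    intro k
    have h1 : 2 * c k ≤ q k := by
      by_cases h : k ∈ S <;> simp [hcdef, h] <;> omega
    calc 2 * c k * u k ≤ q k * u k := Nat.mul_le_mul_right _ h1
    _ = u (k + 1) := hqmul k
  have hclow : ∀ n, n ∈ S → u (n + 1) ≤ 3 * (u n * c n) := by
    intro n hn
    have h1 : q n ≤ 3 * c n := by
      have := hq2 n
      simp only [hcdef, if_pos hn]
      omega
    calc u (n+1) = q n * u n := (hqmul n).symm
    _ ≤ 3 * c n * u n := Nat.mul_le_mul_right _ h1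
    _ = 3 * (u n * c n) := by ring
  set f : ℕ → ℝ := fun k => (c k : ℝ) / (u (k + 1) : ℝ) with hfdef
  have hfnonneg : ∀ k, 0 ≤ f k := fun k => by positivity
  have hfle : ∀ k, f k ≤ (1/2)^(k+1) := by
    intro k
    have h1 : c k * 2 ^ (k+1) ≤ u (k + 1) := by
      calc c k * 2^(k+1) = 2 * c k * 2^k := by ring
      _ ≤ 2 * c k * u k := Nat.mul_le_mul_left _ (hpow k)
      _ ≤ u (k+1) := hcmul k
    rw [hfdef]
    simp only
    rw [div_le_iff₀ (huposR (k+1))]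
    rw [show ((1:ℝ)/2)^(k+1) = (2^(k+1))⁻¹ by rw [one_div, inv_pow]]
    rw [inv_mul_eq_div, le_div_iff₀ (by positivity)]
    exact_mod_cast h1
  have hfsum : Summable f := Summable.of_nonneg_of_le hfnonneg hfle half_summable
  set x : ℝ := ∑' k, f k with hxdef
  -- ## Step 4: decomposition u n * x = N n + r n
  set F : ℕ → ℕ → ℝ := fun n k => (u n : ℝ) * f k with hFdef
  have hFsum : ∀ n, Summable (F n) := fun n => hfsum.mul_left _
  have hFsum' : ∀ n m, Summable (fun k => F n (k + m)) :=
    fun n m => (summable_nat_add_iff m).mpr (hFsum n)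
  have hFnonneg : ∀ n k, 0 ≤ F n k := fun n k => by
    have h1 := hfnonneg k
    have h2 : (0:ℝ) ≤ (u n : ℝ) := by positivity
    exact mul_nonneg h2 h1
  set N : ℕ → ℕ := fun n => ∑ k ∈ Finset.range n, (u n / u (k + 1)) * c k with hNdef
  set r : ℕ → ℝ := fun n => ∑' k, F n (k + n) with hrdef
  have hdecomp : ∀ n, (u n : ℝ) * x = (N n : ℝ) + r n := by
    intro n
    have h1 : ∑' k, F n k = (u n : ℝ) * x := tsum_mul_left
    have h2 := Summable.sum_add_tsum_nat_add (f := F n) n (hFsum n)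
    have hhead : ∑ i ∈ Finset.range n, F n i = (N n : ℝ) := by
      rw [hNdef]
      push_cast
      apply Finset.sum_congr rfl
      intro k hk
      have hk' : k + 1 ≤ n := Finset.mem_range.mp hk
      obtain ⟨d, hd⟩ := hdvdle (k+1) n hk'
      have hdq : u n / u (k+1) = d := by
        rw [hd, Nat.mul_div_cancel_left _ (hupos (k+1))]
      rw [hdq, hFdef, hfdef]
      simp only
      rw [hd]
      push_cast
      have hne : ((u (k+1) : ℝ)) ≠ 0 := ne_of_gt (huposR _)
      calc ((u (k+1) : ℝ) * (d:ℝ)) * ((c k : ℝ) / (u (k+1) : ℝ))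
          = (d:ℝ) * (c k : ℝ) * ((u (k+1) : ℝ) / (u (k+1) : ℝ)) := by ring
      _ = (d:ℝ) * (c k : ℝ) := by rw [div_self hne, mul_one]
    rw [← h1, ← h2, hhead, hrdef]
  have hrnonneg : ∀ n, 0 ≤ r n := fun n => tsum_nonneg (fun k => hFnonneg n _)
  -- ## Step 5: bounds on terms and tails
  have hFbound : ∀ n j, n ≤ j → F n j ≤ (1/2)^(j - n + 1) := by
    intro n j hnj
    have h1 : u n * c j * 2 ^ (j - n + 1) ≤ u (j + 1) := by
      have hg := hgrow n (j - n)
      rw [show n + (j - n) = j by omega] at hg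
      calc u n * c j * 2^(j-n+1) = 2 * c j * (2^(j-n) * u n) := by ring
      _ ≤ 2 * c j * u j := Nat.mul_le_mul_left _ hg
      _ ≤ u (j+1) := hcmul j
    rw [hFdef, hfdef]
    simp only
    rw [mul_div_assoc']
    rw [div_le_iff₀ (huposR (j+1))]
    rw [show ((1:ℝ)/2)^(j-n+1) = (2^(j-n+1))⁻¹ by rw [one_div, inv_pow]]
    rw [inv_mul_eq_div, le_div_iff₀ (by positivity)]
    exact_mod_cast h1
  have hFzero : ∀ n j, j ∉ S → F n j = 0 := by
    intro n j hj
    rw [hFdef, hfdef]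
    simp [hczero j hj]
  have htailLe : ∀ n m J, n ≤ m → (∀ k, k < J → (m + k) ∉ S) →
      (∑' k, F n (k + m)) ≤ (1/2)^(m - n + J) := by
    intro n m J hnm hz
    have hmaj : ∀ k, F n (k + m) ≤ (1/2)^(m-n) * (if k < J then (0:ℝ) else (1/2)^(k+1)) := by
      intro k
      by_cases hk : k < J
      · rw [if_pos hk, mul_zero, hFzero n (k + m) (by rw [add_comm]; exact hz k hk)]
      · rw [if_neg hk, ← pow_add]
        calc F n (k + m) ≤ (1/2)^(k + m - n + 1) := hFbound n (k + m) (by omega)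
        _ = (1/2)^(m - n + (k + 1)) := by congr 1; omega
    calc (∑' k, F n (k + m)) ≤ ∑' k, (1/2)^(m-n) * (if k < J then (0:ℝ) else (1/2)^(k+1)) :=
      Summable.tsum_le_tsum hmaj (hFsum' n m) ((geom_tail_summable J).mul_left _)
    _ = (1/2)^(m-n) * (1/2)^J := by rw [tsum_mul_left, geom_tail_eq]
    _ = (1/2)^(m-n+J) := (pow_add _ _ _).symm
  -- ## Step 6: bounds on r n for n ∈ S
  have hFnnlow : ∀ n, n ∈ S → (1:ℝ)/3 ≤ F n n := by
    intro n hn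
    have h1 := hclow n hn
    have h2 : ((u (n+1) : ℝ)) ≤ 3 * ((u n : ℝ) * (c n : ℝ)) := by exact_mod_cast h1
    rw [hFdef, hfdef]
    simp only
    rw [mul_div_assoc', le_div_iff₀ (huposR (n+1))]
    linarith
  have hFnnup : ∀ n, F n n ≤ 1/2 := by
    intro n
    have h1 : 2 * (u n * c n) ≤ u (n+1) := by
      have h := hcmul n
      calc 2 * (u n * c n) = 2 * c n * u n := by ring
      _ ≤ u (n+1) := h
    have h2 : 2 * ((u n : ℝ) * (c n : ℝ)) ≤ ((u (n+1) : ℝ)) := by exact_mod_cast h1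
    rw [hFdef, hfdef]
    simp only
    rw [mul_div_assoc', div_le_iff₀ (huposR (n+1))]
    linarith
  have hrlow : ∀ n, n ∈ S → (1:ℝ)/3 ≤ r n := by
    intro n hn
    have h := Summable.le_tsum (hFsum' n n) 0 (fun j _ => hFnonneg n _)
    rw [zero_add] at h
    exact le_trans (hFnnlow n hn) h
  have hrup : ∀ n, n ∈ S → r n ≤ 17/32 := by
    intro n hn
    have hsplit := Summable.sum_add_tsum_nat_add (f := fun k => F n (k + n)) 1 (hFsum' n n)
    have htail : (∑' i : ℕ, F n ((i + 1) + n)) ≤ (1/2)^5 := by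
      have hz : ∀ k, k < 4 → (n + 1 + k) ∉ S := by
        intro k hk hmem
        have := hgap n hn (n + 1 + k) hmem (by omega)
        omega
      have h := htailLe n (n+1) 4 (by omega) hz
      rw [show n + 1 - n + 4 = 5 by omega] at h
      have heq : ∀ i : ℕ, F n ((i + 1) + n) = F n (i + (n + 1)) := by
        intro i; congr 1; omega
      rw [tsum_congr heq]
      exact h
    have hhead : ∑ i ∈ Finset.range 1, F n (i + n) = F n n := by simp
    have hup := hFnnup n
    have hr : r n = F n n + ∑' i : ℕ, F n ((i + 1) + n) := by
      rw [hrdef]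
      simp only
      rw [← hsplit, hhead]
    rw [hr]
    norm_num at htail ⊢
    linarith
  -- ## Step 7: value of |u n x - round(u n x)|
  have hval : ∀ n, |(u n : ℝ) * x - (round ((u n : ℝ) * x) : ℝ)|
      = |r n - (round (r n) : ℝ)| := by
    intro n
    rw [hdecomp n]
    have h1 : round ((N n : ℝ) + r n) = (N n : ℤ) + round (r n) := by
      rw [show ((N n : ℝ)) = (((N n : ℤ)) : ℝ) by push_cast; ring]
      exact round_intCast_add _ _
    rw [h1]
    have h2 : (N n : ℝ) + r n - (((N n : ℤ) + round (r n) : ℤ) : ℝ)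
        = r n - (round (r n) : ℝ) := by push_cast; ring
    rw [h2]
  -- ## Step 8: conclusion
  refine ⟨x, ?_, ?_⟩
  · -- I₂-convergence
    intro ε hε
    obtain ⟨J, hJ⟩ := exists_pow_lt_of_lt_one
      (show (0:ℝ) < min ε (1/2) by positivity)
      (by norm_num : (1:ℝ)/2 < 1)
    have hkey : ∀ Jt : ℕ, {n : ℕ | ∃ j, j ≤ Jt ∧ n + j ∈ S} ∈ I₂ := by
      intro Jt
      induction Jt with
      | zero =>
        have heq : {n : ℕ | ∃ j, j ≤ 0 ∧ n + j ∈ S} = S := by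
          ext n; simp [Nat.le_zero]
        rw [heq]; exact hS2
      | succ Jt ih =>
        have hsh : {n : ℕ | n + (Jt + 1) ∈ S} ∈ I₂ := by
          have h := htrans₂ S hS2 (-(Jt + 1 : ℕ) : ℤ)
          have heq : {m : ℕ | ∃ a ∈ S, (a : ℤ) + (-(Jt + 1 : ℕ) : ℤ) = (m : ℤ)}
              = {n : ℕ | n + (Jt + 1) ∈ S} := by
            ext m
            simp only [Set.mem_setOf_eq]
            constructor
            · rintro ⟨a, ha, hEq⟩
              have ham : a = m + (Jt + 1) := by push_cast at hEq; omega
              rwa [← ham]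
            · intro hm
              exact ⟨m + (Jt + 1), hm, by push_cast; ring⟩
          rw [← heq]
          exact h
        have heq2 : {n : ℕ | ∃ j, j ≤ Jt + 1 ∧ n + j ∈ S}
            = {n : ℕ | ∃ j, j ≤ Jt ∧ n + j ∈ S} ∪ {n : ℕ | n + (Jt + 1) ∈ S} := by
          ext n
          simp only [Set.mem_setOf_eq, Set.mem_union]
          constructor
          · rintro ⟨j, hj, hs⟩
            rcases (show j ≤ Jt ∨ j = Jt + 1 by omega) with h | rfl
            · exact Or.inl ⟨j, h, hs⟩
            · exact Or.inr hs
          · rintro (⟨j, hj, hs⟩ | hs)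
            · exact ⟨j, by omega, hs⟩
            · exact ⟨Jt + 1, le_refl _, hs⟩
        rw [heq2]
        exact hunion₂ _ _ ih hsh
    apply hsubset₂ _ _ ?_ (hkey J)
    intro n hn
    simp only [Set.mem_setOf_eq] at hn ⊢
    by_contra hno
    push_neg at hno
    have hz : ∀ k, k < J + 1 → (n + k) ∉ S := fun k hk => hno k (by omega)
    have hr : r n ≤ (1/2)^(n - n + (J + 1)) := htailLe n n (J + 1) (le_refl n) hz
    rw [show n - n + (J + 1) = J + 1 by omega] at hr
    have hmono : ((1:ℝ)/2)^(J+1) ≤ (1/2)^J := by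
      rw [pow_succ]
      nlinarith [pow_pos (by norm_num : (0:ℝ) < 1/2) J]
    have hr2 : r n < min ε (1/2) := lt_of_le_of_lt (le_trans hr hmono) hJ
    have hrlt : r n < 1/2 := lt_of_lt_of_le hr2 (min_le_right _ _)
    have hround : round (r n) = 0 := round_eq_zero_iff.mpr ⟨by linarith [hrnonneg n], hrlt⟩
    rw [hval n, hround] at hn
    push_cast at hn
    rw [sub_zero, abs_of_nonneg (hrnonneg n)] at hn
    have := lt_of_lt_of_le hr2 (min_le_left _ _)
    linarith
  · -- not I₁-convergent
    intro hcon
    have hmem := hcon (1/3) (by norm_num)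
    apply hS1
    refine hsubset₁ S _ ?_ hmem
    intro n hn
    simp only [Set.mem_setOf_eq]
    rw [hval n]
    have h1 := hrlow n hn
    have h2 := hrup n hn
    have hround : round (r n) = 0 ∨ round (r n) = 1 := by
      rw [round_eq]
      have hlow : (0:ℤ) ≤ ⌊r n + 1/2⌋ := Int.floor_nonneg.mpr (by linarith)
      have hup : ⌊r n + 1/2⌋ < 2 := Int.floor_lt.mpr (by push_cast; linarith)
      omega
    rcases hround with h | h
    · rw [h]
      push_cast
      rw [sub_zero, abs_of_nonneg (by linarith)]
      linarith
    · rw [h]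
      push_cast
      rw [abs_of_nonpos (by linarith)]
      linarith
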